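/- Let f : S¹ → S¹ be a continuous monotone map of degree 1. Then f is the uniform limit of a sequence of orientation-preserving homeomorphisms of S¹. -/

import Mathlib

open Filter Real

lemma exp_open : IsOpenMap (fun t : ℝ => Circle.exp t) := by
  have h1 : IsOpenMap ((↑) : ℝ → AddCircle (2 * π)) := QuotientAddGroup.isOpenMap_coe
  have h2 := AddCircle.homeomorphCircle'.isOpenMap
  exact h2.comp h1

lemma exp_surj (z : Circle) : ∃ t : ℝ, Circle.exp t = z := by
  obtain ⟨x, hx⟩ := AddCircle.homeomorphCircle'.surjective z
  obtain ⟨t, rfl⟩ := QuotientAddGroup.mk_surjective x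
  exact ⟨t, hx⟩

lemma exp_lip : LipschitzWith 1 (fun t : ℝ => Circle.exp t) := by
  apply LipschitzWith.of_dist_le_mul
  intro x y
  have key : ∀ t : ℝ, HasDerivAt (fun s : ℝ => Complex.exp (s * Complex.I))
      (Complex.exp (t * Complex.I) * Complex.I) t := by
    intro t
    have h1 : HasDerivAt (fun s : ℝ => ((s : ℂ) * Complex.I)) Complex.I t := by
      simpa using (Complex.ofRealCLM.hasDerivAt (x := t)).mul_const Complex.I
    simpa using h1.cexp
  have := Convex.norm_image_sub_le_of_norm_hasDerivWithin_le
    (f := fun s : ℝ => Complex.exp (s * Complex.I))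
    (f' := fun t : ℝ => Complex.exp (t * Complex.I) * Complex.I) (C := 1) (s := Set.univ)
    (fun t _ => (key t).hasDerivWithinAt)
    (fun t _ => by simp [Complex.norm_exp]) convex_univ (Set.mem_univ y) (Set.mem_univ x)
  rw [NNReal.coe_one, one_mul]
  calc dist (Circle.exp x) (Circle.exp y)
      = ‖Complex.exp (x * Complex.I) - Complex.exp (y * Complex.I)‖ := by
        rw [show dist (Circle.exp x) (Circle.exp y) = dist (Circle.exp x : ℂ) (Circle.exp y) from rfl, dist_eq_norm]; rfl
    _ ≤ 1 * ‖(x : ℝ) - y‖ := this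
    _ = dist x y := by rw [one_mul, dist_eq_norm]

lemma lift_int {G : ℝ → ℝ} (hdeg : ∀ t : ℝ, G (t + 2 * π) = G t + 2 * π) :
    ∀ (k : ℤ) (t : ℝ), G (t + k * (2 * π)) = G t + k * (2 * π) := by
  have hper : Function.Periodic (fun t => G t - t) (2 * π) := by
    intro t; simp only [hdeg]; ring
  intro k t
  have := (hper.int_mul k) t
  linarith [this]

lemma exp_ne_of {x y : ℝ} (h : ∀ k : ℤ, x ≠ y + k * (2 * π)) :
    Circle.exp x ≠ Circle.exp y := by
  intro he
  obtain ⟨m, hm⟩ := Circle.exp_eq_exp.1 he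
  exact h m hm

lemma F_mono (f : Circle → Circle)
    (hmono : ∀ w : Circle, IsPreconnected (f ⁻¹' {w}))
    (F : ℝ → ℝ) (hF : Continuous F)
    (hlift : ∀ t : ℝ, f (Circle.exp t) = Circle.exp (F t))
    (hdeg : ∀ t : ℝ, F (t + 2 * π) = F t + 2 * π) : Monotone F := by
  have hπ : (0:ℝ) < 2 * π := by positivity
  have hFk := lift_int hdeg
  by_contra hnm
  rw [Monotone] at hnm; push_neg at hnm
  obtain ⟨a₀, b, hab₀, hFba₀⟩ := hnm
  -- reduce to a < b < a + 2π with F b < F a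
  obtain ⟨a, hab, hba, hFba⟩ : ∃ a, a < b ∧ b < a + 2 * π ∧ F b < F a := by
    set x : ℝ := (b - a₀) / (2 * π) with hx
    set k : ℤ := ⌈x⌉ - 1 with hk
    have hx0 : 0 < x := by
      apply div_pos _ hπ
      rcases lt_or_eq_of_le hab₀ with h | h
      · linarith
      · subst h; exact absurd hFba₀ (lt_irrefl _)
    have hk0 : (0:ℤ) ≤ k := by
      have : (1:ℤ) ≤ ⌈x⌉ := by exact_mod_cast Int.le_ceil_iff.2 (by norm_num; linarith)
      omega
    have hceil₁ : x ≤ (⌈x⌉ : ℝ) := Int.le_ceil x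
    have hceil₂ : (⌈x⌉ : ℝ) < x + 1 := Int.ceil_lt_add_one x
    set a : ℝ := a₀ + k * (2 * π) with ha
    have hFa : F a = F a₀ + k * (2 * π) := hFk k a₀
    have hkx : (k:ℝ) = (⌈x⌉:ℝ) - 1 := by push_cast [hk]; ring
    have hxx : x * (2 * π) = b - a₀ := div_mul_cancel₀ _ (ne_of_gt hπ)
    have h1 : a < b := by
      have : (k:ℝ) * (2*π) < x * (2*π) := by
        apply mul_lt_mul_of_pos_right _ hπ
        rw [hkx]; linarith
      rw [ha]; linarith [hxx ▸ this]
    have h2 : b ≤ a + 2 * π := by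
      have : (x - 1) * (2*π) ≤ (k:ℝ) * (2*π) := by
        apply mul_le_mul_of_nonneg_right _ (le_of_lt hπ)
        rw [hkx]; linarith
      rw [ha]
      have h2' : x * (2*π) - 2*π ≤ (k:ℝ)*(2*π) := by linarith [this]
      linarith [hxx ▸ h2']
    have h3 : F b < F a := by
      rw [hFa]
      have : (0:ℝ) ≤ (k:ℝ) * (2*π) := by
        apply mul_nonneg _ (le_of_lt hπ)
        exact_mod_cast hk0
      linarith
    rcases lt_or_eq_of_le h2 with h2' | h2'
    · exact ⟨a, h1, h2', h3⟩
    · exfalso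
      have : F b = F a + 2 * π := by rw [h2']; exact hdeg a
      linarith
  -- choose a regular value c ∈ (F b, F a)
  set Bad : Set ℝ := (Set.range fun k : ℤ => F a + k * (2 * π)) ∪
    (Set.range fun k : ℤ => F b + k * (2 * π)) with hBad
  have hBadC : Bad.Countable := (Set.countable_range _).union (Set.countable_range _)
  obtain ⟨c, hcmem, hcBad⟩ : ∃ c ∈ Set.Ioo (F b) (F a), c ∉ Bad := by
    by_contra h
    push_neg at h
    have hsub : Set.Ioo (F b) (F a) ⊆ Bad := fun x hx => h x hx
    have := (hBadC.mono hsub).le_aleph0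
    rw [Cardinal.mk_Ioo_real hFba] at this
    exact absurd this (not_le.2 Cardinal.aleph0_lt_continuum)
  have hca : ∀ k : ℤ, F a ≠ c + k * (2 * π) := by
    intro k hk
    exact hcBad (Or.inl ⟨-k, by push_cast; linarith⟩)
  have hcb : ∀ k : ℤ, F b ≠ c + k * (2 * π) := by
    intro k hk
    exact hcBad (Or.inr ⟨-k, by push_cast; linarith⟩)
  -- IVT gives two preimages
  obtain ⟨t₁, ht₁mem, ht₁⟩ : ∃ t₁ ∈ Set.Ioo a b, F t₁ = c :=
    intermediate_value_Ioo' (le_of_lt hab) (hF.continuousOn) hcmem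
  obtain ⟨t₂, ht₂mem, ht₂⟩ : ∃ t₂ ∈ Set.Ioo b (a + 2 * π), F t₂ = c := by
    apply intermediate_value_Ioo (le_of_lt hba) (hF.continuousOn)
    constructor
    · exact hcmem.1
    · rw [hdeg]; linarith [hcmem.2]
  -- disconnection
  set P : Set Circle := f ⁻¹' {Circle.exp c} with hP
  set U : Set Circle := Circle.exp '' Set.Ioo a b with hU
  set V : Set Circle := Circle.exp '' Set.Ioo b (a + 2 * π) with hV
  have hUo : IsOpen U := exp_open _ isOpen_Ioo
  have hVo : IsOpen V := exp_open _ isOpen_Ioo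
  have hPU : (P ∩ U).Nonempty := ⟨Circle.exp t₁,
    by simp [hP, hlift, ht₁], ⟨t₁, ht₁mem, rfl⟩⟩
  have hPV : (P ∩ V).Nonempty := ⟨Circle.exp t₂,
    by simp [hP, hlift, ht₂], ⟨t₂, ht₂mem, rfl⟩⟩
  have hcover : P ⊆ U ∪ V := by
    intro p hp
    obtain ⟨s, hs⟩ := exp_surj p
    set t : ℝ := toIcoMod hπ a s with ht
    have htmem : t ∈ Set.Ico a (a + 2 * π) := toIcoMod_mem_Ico hπ a s
    have hexpts : Circle.exp t = Circle.exp s := by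
      apply Circle.exp_eq_exp.2
      refine ⟨-(toIcoDiv hπ a s), ?_⟩
      have := self_sub_toIcoMod hπ a s
      rw [zsmul_eq_mul] at this
      push_cast
      linarith
    have hpt : p = Circle.exp t := by rw [hexpts, hs]
    clear_value t
    have hFt : ∃ m : ℤ, F t = c + m * (2 * π) := by
      have : f p = Circle.exp c := hp
      rw [hpt, hlift] at this
      exact Circle.exp_eq_exp.1 this
    obtain ⟨m, hm⟩ := hFt
    have htA : t ≠ a := by rintro rfl; exact hca m hm
    have htb : t ≠ b := by rintro rfl; exact hcb m hm
    rcases lt_trichotomy t b with h | h | h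
    · exact Or.inl ⟨t, ⟨lt_of_le_of_ne htmem.1 (Ne.symm htA), h⟩, hpt.symm⟩
    · exact absurd h htb
    · exact Or.inr ⟨t, ⟨h, htmem.2⟩, hpt.symm⟩
  have hdisj : U ∩ V = ∅ := by
    ext p
    simp only [Set.mem_inter_iff, Set.mem_empty_iff_false, iff_false]
    rintro ⟨⟨x, hx, hxp⟩, ⟨y, hy, hyp⟩⟩
    have : Circle.exp x = Circle.exp y := by rw [hxp, hyp]
    obtain ⟨m, hm⟩ := Circle.exp_eq_exp.1 this
    have h1 : x - y < 0 := by linarith [hx.2, hy.1]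
    have h2 : -(2 * π) < x - y := by linarith [hx.1, hy.2]
    have hm1 : (m:ℝ) * (2 * π) < 0 := by linarith
    have hm2 : -(2*π) < (m:ℝ) * (2 * π) := by linarith
    have : (m:ℝ) < 0 := by nlinarith
    have : (-1:ℝ) < (m:ℝ) := by nlinarith
    have hmlt : m < 0 := by exact_mod_cast ‹(m:ℝ) < 0›
    have hmgt : (-1:ℤ) < m := by exact_mod_cast ‹(-1:ℝ) < (m:ℝ)›
    omega
  obtain ⟨p, hp⟩ := hmono (Circle.exp c) U V hUo hVo hcover hPU hPV
  rw [hdisj] at hp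
  exact hp.2

lemma G_surj {G : ℝ → ℝ} (hGc : Continuous G) (hGm : Monotone G)
    (hGd : ∀ t : ℝ, G (t + 2 * π) = G t + 2 * π) : Function.Surjective G := by
  have hπ : (0:ℝ) < 2 * π := by positivity
  have hk := lift_int hGd
  apply hGc.surjective
  · apply tendsto_atTop_atTop_of_monotone hGm
    intro y
    obtain ⟨k, hk'⟩ := exists_nat_gt ((y - G 0) / (2 * π))
    refine ⟨(k:ℤ) * (2 * π), ?_⟩
    have := hk k 0
    push_cast at this ⊢
    rw [zero_add] at this
    rw [this]
    rw [div_lt_iff₀ hπ] at hk'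
    linarith
  · apply tendsto_atBot_atBot_of_monotone hGm
    intro y
    obtain ⟨k, hk'⟩ := exists_nat_gt ((G 0 - y) / (2 * π))
    refine ⟨-((k:ℤ) * (2 * π)), ?_⟩
    have := hk (-k) 0
    push_cast at this ⊢
    rw [zero_add] at this
    rw [show -((k:ℝ) * (2*π)) = -(k:ℝ)*(2*π) by ring, this]
    rw [div_lt_iff₀ hπ] at hk'
    linarith

lemma mkHomeo (G : ℝ → ℝ) (hGc : Continuous G) (hGm : StrictMono G)
    (hGd : ∀ t : ℝ, G (t + 2 * π) = G t + 2 * π) :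
    ∃ h : Circle ≃ₜ Circle, ∀ t : ℝ, h (Circle.exp t) = Circle.exp (G t) := by
  have hπ : (0:ℝ) < 2 * π := by positivity
  have hsurj : Function.Surjective G := G_surj hGc hGm.monotone hGd
  set E : ℝ ≃o ℝ := StrictMono.orderIsoOfSurjective G hGm hsurj with hE
  set G' : ℝ → ℝ := fun s => E.symm s with hG'
  have hEG : ∀ t, E t = G t := fun t => rfl
  have hGE : ∀ y, G (E.symm y) = y := fun y => by rw [← hEG]; exact E.apply_symm_apply y
  have hG'd : ∀ s : ℝ, G' (s + 2 * π) = G' s + 2 * π := by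
    intro s
    apply hGm.injective
    show G (E.symm (s + 2 * π)) = G (E.symm s + 2 * π)
    rw [hGE, hGd, hGE]
  have hG'c : Continuous G' := E.symm.toHomeomorph.continuous
  have cond : ∀ (H : ℝ → ℝ), (∀ t : ℝ, H (t + 2 * π) = H t + 2 * π) →
      ∀ (s t : ℝ), @Setoid.r _
        (QuotientAddGroup.leftRel (AddSubgroup.zmultiples (2 * π))) s t →
        ((↑(H s) : AddCircle (2 * π))) = ↑(H t) := by
    intro H hH s t hst
    rw [QuotientAddGroup.leftRel_apply] at hst
    obtain ⟨k, hk⟩ := hst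
    simp only [zsmul_eq_mul] at hk
    have : t = s + k * (2 * π) := by linarith [hk]
    subst this
    rw [lift_int hH k s]
    symm
    rw [QuotientAddGroup.eq]
    refine ⟨-k, ?_⟩
    show (-k : ℤ) • (2 * π) = _
    rw [zsmul_eq_mul]
    push_cast
    ring
  set Φ : AddCircle (2 * π) → AddCircle (2 * π) :=
    fun x => Quotient.liftOn' x (fun t => (↑(G t) : AddCircle (2 * π))) (cond G hGd) with hΦ
  set Ψ : AddCircle (2 * π) → AddCircle (2 * π) :=
    fun x => Quotient.liftOn' x (fun t => (↑(G' t) : AddCircle (2 * π))) (cond G' hG'd) with hΨ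
  have hΦmk : ∀ t : ℝ, Φ ↑t = ↑(G t) := fun t => rfl
  have hΨmk : ∀ t : ℝ, Ψ ↑t = ↑(G' t) := fun t => rfl
  have hΨΦ : ∀ x, Ψ (Φ x) = x := by
    intro x
    induction x using Quotient.inductionOn' with
    | h t =>
      show Ψ (Φ ↑t) = (↑t : AddCircle (2 * π))
      rw [hΦmk, hΨmk]
      congr 1
      exact E.symm_apply_apply t
  have hΦΨ : ∀ x, Φ (Ψ x) = x := by
    intro x
    induction x using Quotient.inductionOn' with
    | h t =>
      show Φ (Ψ ↑t) = (↑t : AddCircle (2 * π))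
      rw [hΨmk, hΦmk]
      congr 1
      exact hGE t
  have hΦc : Continuous Φ :=
    Continuous.quotient_liftOn' (continuous_quotient_mk'.comp hGc) _
  have hΨc : Continuous Ψ :=
    Continuous.quotient_liftOn' (continuous_quotient_mk'.comp hG'c) _
  set hA : AddCircle (2 * π) ≃ₜ AddCircle (2 * π) :=
    { toFun := Φ, invFun := Ψ, left_inv := hΨΦ, right_inv := hΦΨ,
      continuous_toFun := hΦc, continuous_invFun := hΨc } with hhA
  refine ⟨(AddCircle.homeomorphCircle'.symm.trans hA).trans AddCircle.homeomorphCircle', ?_⟩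
  intro t
  simp only [Homeomorph.trans_apply]
  rw [← AddCircle.homeomorphCircle'_apply_mk t, Homeomorph.symm_apply_apply]
  show AddCircle.homeomorphCircle' (Φ ↑t) = _
  rw [hΦmk]
  exact AddCircle.homeomorphCircle'_apply_mk (G t)


/-- Youngs' theorem on the circle: a continuous monotone degree-one self-map of the circle
is the uniform limit of orientation-preserving homeomorphisms of the circle. Degree one is
expressed by a continuous lift `F` with `F (t + 2π) = F t + 2π`, and an orientation-preserving
homeomorphism by a strictly increasing continuous lift. -/
theorem monotone_degree_one_circle_map_uniform_limit_of_homeos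
    (f : Circle → Circle) (hc : Continuous f)
    (hmono : ∀ w : Circle, IsPreconnected (f ⁻¹' {w}))
    (F : ℝ → ℝ) (hF : Continuous F)
    (hlift : ∀ t : ℝ, f (Circle.exp t) = Circle.exp (F t))
    (hdeg : ∀ t : ℝ, F (t + 2 * Real.pi) = F t + 2 * Real.pi) :
    ∃ h : ℕ → (Circle ≃ₜ Circle),
      (∀ n, ∃ G : ℝ → ℝ, Continuous G ∧ StrictMono G ∧
        (∀ t : ℝ, h n (Circle.exp t) = Circle.exp (G t)) ∧
        (∀ t : ℝ, G (t + 2 * Real.pi) = G t + 2 * Real.pi)) ∧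
      TendstoUniformly (fun n => ⇑(h n)) f atTop := by
  have hπ : (0:ℝ) < 2 * π := by positivity
  have hFmono : Monotone F := F_mono f hmono F hF hlift hdeg
  set G : ℕ → ℝ → ℝ := fun n t => ((n:ℝ) * F t + t) / (n + 1) with hG
  have hGc : ∀ n, Continuous (G n) :=
    fun n => ((continuous_const.mul hF).add continuous_id).div_const _
  have hGm : ∀ n, StrictMono (G n) := by
    intro n
    have h1 : Monotone fun t => (n:ℝ) * F t :=
      fun x y h => mul_le_mul_of_nonneg_left (hFmono h) (by positivity)
    have h2 : StrictMono fun t : ℝ => (n:ℝ) * F t + t := h1.add_strictMono strictMono_id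
    exact h2.div_const (by positivity)
  have hGd : ∀ n t, G n (t + 2 * π) = G n t + 2 * π := by
    intro n t
    show ((n:ℝ) * F (t + 2*π) + (t + 2*π)) / (n + 1) = ((n:ℝ) * F t + t) / (n + 1) + 2*π
    rw [hdeg]
    have : ((n:ℝ) + 1) ≠ 0 := by positivity
    field_simp
    ring
  choose h hh using fun n => mkHomeo (G n) (hGc n) (hGm n) (hGd n)
  refine ⟨h, fun n => ⟨G n, hGc n, hGm n, hh n, hGd n⟩, ?_⟩
  -- global bound on |F t - t|
  obtain ⟨M, hM⟩ : ∃ M, ∀ t ∈ Set.Icc 0 (2 * π), |F t - t| ≤ M := by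
    obtain ⟨M, hM⟩ := (isCompact_Icc (a := (0:ℝ)) (b := 2*π)).exists_bound_of_continuousOn
      ((hF.sub continuous_id).continuousOn)
    exact ⟨M, fun t ht => by simpa using hM t ht⟩
  have hM0 : 0 ≤ M := le_trans (abs_nonneg _) (hM 0 ⟨le_refl _, le_of_lt hπ⟩)
  have hMall : ∀ t : ℝ, |F t - t| ≤ M := by
    intro t
    set t₀ : ℝ := toIcoMod hπ 0 t with ht₀
    have hmem : t₀ ∈ Set.Ico 0 (0 + 2 * π) := toIcoMod_mem_Ico hπ 0 t
    have hEq : t = t₀ + (toIcoDiv hπ 0 t) * (2 * π) := by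
      have := self_sub_toIcoMod hπ 0 t
      rw [zsmul_eq_mul] at this
      linarith
    calc |F t - t| = |F t₀ - t₀| := by
          rw [hEq, lift_int hdeg]
          ring_nf
      _ ≤ M := hM t₀ ⟨hmem.1, by linarith [hmem.2]⟩
  -- uniform convergence
  refine Metric.tendstoUniformly_iff.mpr ?_
  intro ε hε
  obtain ⟨N, hN⟩ := exists_nat_gt (M / ε)
  rw [eventually_atTop]
  refine ⟨N, fun n hn x => ?_⟩
  obtain ⟨t, rfl⟩ := exp_surj x
  rw [hlift, hh n t]
  have hbd : dist (Circle.exp (F t)) (Circle.exp (G n t)) ≤ |F t - G n t| := by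
    have := exp_lip.dist_le_mul (F t) (G n t)
    rwa [NNReal.coe_one, one_mul, Real.dist_eq] at this
  have hn1 : (0:ℝ) < (n:ℝ) + 1 := by positivity
  have hdiff : F t - G n t = (F t - t) / ((n:ℝ) + 1) := by
    show F t - ((n:ℝ) * F t + t) / (n + 1) = (F t - t) / ((n:ℝ) + 1)
    field_simp
    ring
  have : |F t - G n t| ≤ M / ((n:ℝ) + 1) := by
    rw [hdiff, abs_div, abs_of_pos hn1]
    gcongr
    exact hMall t
  have hlast : M / ((n:ℝ) + 1) < ε := by
    rw [div_lt_iff₀ hn1]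
    have : M / ε < (n:ℝ) + 1 := lt_of_lt_of_le hN (by exact_mod_cast Nat.le_succ_of_le hn)
    rw [div_lt_iff₀ hε] at this
    nlinarith
  calc dist (Circle.exp (F t)) (Circle.exp (G n t)) ≤ |F t - G n t| := hbd
    _ ≤ M / ((n:ℝ) + 1) := ‹_›
    _ < ε := hlast
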